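/- Every ball-basis satisfies the density property: for any measurable set E, almost every point x ∈ E is a density point of E, i.e. for every ε > 0 there exists a ball B ∋ x with μ(B ∩ E) > (1 − ε) μ(B). -/

import Mathlib

open MeasureTheory Set ENNReal NNReal

/-- A ball-basis on a measure space `(X, μ)`: a family of measurable sets of positive
finite measure satisfying conditions B1)-B4) of Karagulyan. -/
structure BallBasis (X : Type*) [MeasurableSpace X] (μ : Measure X) where
  balls : Set (Set X)
  K : ℝ≥0
  K_pos : 0 < K
  measurableSet : ∀ B ∈ balls, MeasurableSet B
  measure_pos : ∀ B ∈ balls, 0 < μ B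
  measure_lt_top : ∀ B ∈ balls, μ B < ∞
  exists_ball : ∀ x y : X, ∃ B ∈ balls, x ∈ B ∧ y ∈ B
  approx : ∀ E : Set X, MeasurableSet E → ∀ ε : ℝ≥0∞, 0 < ε →
      ∃ Bs : ℕ → Set X, (∀ k, Bs k ∈ balls) ∧ μ (symmDiff E (⋃ k, Bs k)) < ε
  hull : Set X → Set X
  hull_mem : ∀ B ∈ balls, hull B ∈ balls
  star_subset_hull : ∀ B ∈ balls,
      (⋃₀ {A | A ∈ balls ∧ μ A ≤ 2 * μ B ∧ (A ∩ B).Nonempty}) ⊆ hull B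
  measure_hull_le : ∀ B ∈ balls, μ (hull B) ≤ (K : ℝ≥0∞) * μ B

namespace BallBasis

variable {X : Type*} [MeasurableSpace X] {μ : Measure X}

/-- `B* = ⋃ {A ∈ ℬ : μ A ≤ 2 μ B, A ∩ B ≠ ∅}`. -/
def star (ℬ : BallBasis X μ) (B : Set X) : Set X :=
  ⋃₀ {A | A ∈ ℬ.balls ∧ μ A ≤ 2 * μ B ∧ (A ∩ B).Nonempty}

/-- The doubling condition for a ball-basis, with doubling constant `η`. -/
def Doubling (ℬ : BallBasis X μ) (η : ℝ≥0) : Prop :=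
  ∀ B ∈ ℬ.balls, ℬ.star B ≠ univ →
    ∃ B' ∈ ℬ.balls, B ⊂ B' ∧ μ B' ≤ (η : ℝ≥0∞) * μ B

end BallBasis

section Aux

open MeasureTheory Set ENNReal NNReal

/-- Every family of sets indexed by a subset of `ℕ` has a maximal pairwise-disjoint
subfamily. -/
private lemma exists_maximal_disjoint {X : Type*} (B : ℕ → Set X) (C : Set ℕ) :
    ∃ T, T ⊆ C ∧ T.PairwiseDisjoint B ∧
      ∀ k ∈ C, (∀ j ∈ T, Disjoint (B k) (B j)) → k ∈ T := by
  obtain ⟨T, hT⟩ := zorn_subset {T | T ⊆ C ∧ T.PairwiseDisjoint B} (by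
    intro c hc hchain
    refine ⟨⋃₀ c, ⟨?_, ?_⟩, fun s hs => subset_sUnion_of_mem hs⟩
    · exact sUnion_subset fun s hs => (hc hs).1
    · intro i hi j hj hij
      obtain ⟨s, hs, his⟩ := hi
      obtain ⟨t, ht, hjt⟩ := hj
      rcases hchain.total hs ht with h | h
      · exact (hc ht).2 (h his) hjt hij
      · exact (hc hs).2 his (h hjt) hij)
  refine ⟨T, hT.1.1, hT.1.2, fun k hk hdisj => ?_⟩
  have hins : insert k T ∈ {T | T ⊆ C ∧ T.PairwiseDisjoint B} := by
    refine ⟨insert_subset hk hT.1.1, hT.1.2.insert fun j hj _ => hdisj j hj⟩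
  exact hT.2 hins (subset_insert k T) (mem_insert k T)

/-- Vitali-type covering lemma for a ball-basis: from any countable family of balls of
uniformly bounded measure one can select a pairwise disjoint subfamily whose hulls cover
every ball of the original family. -/
private lemma ballBasis_vitali {X : Type*} [MeasurableSpace X] {μ : Measure X}
    (ℬ : BallBasis X μ) (B : ℕ → Set X) (S : Set ℕ) (hB : ∀ k ∈ S, B k ∈ ℬ.balls)
    {M : ℝ≥0∞} (hMtop : M ≠ ∞) (hle : ∀ k ∈ S, μ (B k) ≤ M) :
    ∃ T, T ⊆ S ∧ T.PairwiseDisjoint B ∧ ∀ k ∈ S, ∃ j ∈ T, B k ⊆ ℬ.hull (B j) := by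
  classical
  have h2pow_ne_top : ∀ n : ℕ, ((2 : ℝ≥0∞) ^ n) ≠ ∞ := fun n => ENNReal.pow_ne_top ENNReal.ofNat_ne_top
  have h2pow_ne_zero : ∀ n : ℕ, ((2 : ℝ≥0∞) ^ n) ≠ 0 := fun n => pow_ne_zero n two_ne_zero
  -- from layer `n` bound to twice the next lower bound
  have hstep : ∀ n : ℕ, M / 2 ^ n ≤ 2 * (M / 2 ^ (n + 1)) := by
    intro n
    rw [ENNReal.div_le_iff (h2pow_ne_zero n) (h2pow_ne_top n)]
    have : 2 * (M / 2 ^ (n + 1)) * 2 ^ n = M / 2 ^ (n + 1) * 2 ^ (n + 1) := by ring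
    rw [this, ENNReal.div_mul_cancel (h2pow_ne_zero (n + 1)) (h2pow_ne_top (n + 1))]
  have hdec : ∀ n : ℕ, M / 2 ^ (n + 1) ≤ M / 2 ^ n := fun n =>
    ENNReal.div_le_div le_rfl (pow_le_pow_right₀ one_le_two n.le_succ)
  -- the layers
  set L : ℕ → Set ℕ := fun n =>
    {k ∈ S | M / 2 ^ (n + 1) < μ (B k) ∧ μ (B k) ≤ M / 2 ^ n} with hLdef
  -- every index belongs to some layer
  have hlayer : ∀ k ∈ S, ∃ n, k ∈ L n := by
    intro k hk
    have hpos : 0 < μ (B k) := ℬ.measure_pos _ (hB k hk)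
    have hfin : μ (B k) ≠ ∞ := ((hle k hk).trans_lt hMtop.lt_top).ne
    have hex : ∃ n : ℕ, M / 2 ^ (n + 1) < μ (B k) := by
      obtain ⟨n, hn⟩ := ENNReal.exists_nat_gt (r := M / μ (B k))
        (ENNReal.div_lt_top hMtop hpos.ne').ne
      refine ⟨n, ?_⟩
      have hn2 : M / μ (B k) < 2 ^ (n + 1) := by
        refine hn.trans_le ?_
        have : (n : ℝ≥0∞) ≤ ((2 ^ (n + 1) : ℕ) : ℝ≥0∞) := by
          exact_mod_cast (Nat.lt_two_pow_self (n := n)).le.trans (Nat.pow_le_pow_right (by norm_num) n.le_succ)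
        simpa [Nat.cast_pow] using this
      rw [ENNReal.div_lt_iff (Or.inl hpos.ne') (Or.inl hfin)] at hn2
      rw [ENNReal.div_lt_iff (Or.inl (h2pow_ne_zero (n + 1))) (Or.inl (h2pow_ne_top (n + 1)))]
      calc M < 2 ^ (n + 1) * μ (B k) := hn2
        _ = μ (B k) * 2 ^ (n + 1) := mul_comm _ _
    set n := Nat.find hex with hn
    refine ⟨n, hk, Nat.find_spec hex, ?_⟩
    rcases Nat.eq_zero_or_pos n with h0 | hpos'
    · rw [h0]
      simpa using hle k hk
    · obtain ⟨m, hm⟩ := Nat.exists_eq_succ_of_ne_zero hpos'.ne'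
      have := Nat.find_min hex (m := m) (by omega)
      rw [hm]
      exact not_lt.mp this
  -- a maximal disjoint selection function
  choose sel hsel₁ hsel₂ hsel₃ using fun C => exists_maximal_disjoint B C
  -- candidates at layer `n`, given already-selected indices `T`
  set Cand : Set ℕ → ℕ → Set ℕ :=
    fun T n => {k ∈ L n | ∀ j ∈ T, Disjoint (B k) (B j)} with hCand
  -- cumulative selection after the first `n` layers
  set Tn : ℕ → Set ℕ := fun n => Nat.rec (∅ : Set ℕ) (fun n T => T ∪ sel (Cand T n)) n with hTn
  have hTnsucc : ∀ n, Tn (n + 1) = Tn n ∪ sel (Cand (Tn n) n) := fun n => rfl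
  have hmono : Monotone Tn := monotone_nat_of_le_succ fun n => by
    rw [hTnsucc]; exact subset_union_left
  have hTnL : ∀ n, Tn (n + 1) ⊆ Tn n ∪ L n := by
    intro n
    rw [hTnsucc]
    exact union_subset_union_right _ ((hsel₁ _).trans (sep_subset _ _))
  have hTnS : ∀ n, Tn n ⊆ S := by
    intro n
    induction n with
    | zero => exact empty_subset S
    | succ n ih => exact (hTnL n).trans (union_subset ih (sep_subset _ _))
  have hInv : ∀ n, ∀ j ∈ Tn n, M / 2 ^ n < μ (B j) := by
    intro n
    induction n with
    | zero => simp [hTn]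
    | succ n ih =>
      intro j hj
      rcases hTnL n hj with h | h
      · exact lt_of_le_of_lt (hdec n) (ih j h)
      · exact h.2.1
  have hdisj : ∀ n, (Tn n).PairwiseDisjoint B := by
    intro n
    induction n with
    | zero => simp [hTn]
    | succ n ih =>
      rw [hTnsucc, Set.pairwiseDisjoint_union]
      refine ⟨ih, hsel₂ _, fun i hi j hj _ => ?_⟩
      exact ((hsel₁ _ hj).2 i hi).symm
  refine ⟨⋃ n, Tn n, ?_, ?_, ?_⟩
  · exact iUnion_subset hTnS
  · intro i hi j hj hij
    obtain ⟨a, hia⟩ := mem_iUnion.mp hi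
    obtain ⟨b, hjb⟩ := mem_iUnion.mp hj
    exact hdisj (max a b) (hmono (le_max_left a b) hia) (hmono (le_max_right a b) hjb) hij
  · intro k hk
    obtain ⟨n, hkL⟩ := hlayer k hk
    -- find a selected index whose ball meets `B k` and has comparable measure
    have hmain : ∃ j ∈ Tn (n + 1), ¬Disjoint (B k) (B j) ∧ μ (B k) ≤ 2 * μ (B j) := by
      by_cases h : ∃ j ∈ Tn n, ¬Disjoint (B k) (B j)
      · obtain ⟨j, hj, hnd⟩ := h
        exact ⟨j, hmono n.le_succ hj, hnd,
          hkL.2.2.trans ((hInv n j hj).le.trans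
            (le_mul_of_one_le_left zero_le one_le_two))⟩
      · push_neg at h
        have hkC : k ∈ Cand (Tn n) n := ⟨hkL, h⟩
        by_cases h2 : ∃ j ∈ sel (Cand (Tn n) n), ¬Disjoint (B k) (B j)
        · obtain ⟨j, hj, hnd⟩ := h2
          have hjL : j ∈ L n := (hsel₁ _ hj).1
          refine ⟨j, (hTnsucc n ▸ mem_union_right _ hj), hnd, ?_⟩
          calc μ (B k) ≤ M / 2 ^ n := hkL.2.2
            _ ≤ 2 * (M / 2 ^ (n + 1)) := hstep n
            _ ≤ 2 * μ (B j) := mul_le_mul_right hjL.2.1.le 2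
        · push_neg at h2
          have hkT : k ∈ sel (Cand (Tn n) n) := hsel₃ _ k hkC h2
          refine ⟨k, (hTnsucc n ▸ mem_union_right _ hkT), ?_, ?_⟩
          · rw [disjoint_self, Set.bot_eq_empty]
            exact (nonempty_of_measure_ne_zero (ℬ.measure_pos _ (hB k hk)).ne').ne_empty
          · exact le_mul_of_one_le_left zero_le one_le_two
    obtain ⟨j, hj, hnd, hμ⟩ := hmain
    have hjS : j ∈ S := hTnS (n + 1) hj
    refine ⟨j, mem_iUnion.mpr ⟨n + 1, hj⟩, ?_⟩
    refine (subset_sUnion_of_mem ?_).trans (ℬ.star_subset_hull _ (hB j hjS))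
    exact ⟨hB k hk, hμ, Set.not_disjoint_iff_nonempty_inter.mp hnd⟩

end Aux

section Key

open MeasureTheory Set ENNReal NNReal

/-- For a fixed threshold `ε ∈ (0, 1]`, the set of points of `E` at which every ball
containing the point has relative `E`-measure at most `1 - ε` is a null set. -/
private lemma ballBasis_density_aux {X : Type*} [MeasurableSpace X] {μ : Measure X}
    (ℬ : BallBasis X μ) {E : Set X} (hE : MeasurableSet E) {ε : ℝ≥0∞}
    (hε0 : 0 < ε) (hε1 : ε ≤ 1) :
    μ {x | x ∈ E ∧ ∀ B ∈ ℬ.balls, x ∈ B → μ (B ∩ E) ≤ (1 - ε) * μ B} = 0 := by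
  classical
  set A := {x | x ∈ E ∧ ∀ B ∈ ℬ.balls, x ∈ B → μ (B ∩ E) ≤ (1 - ε) * μ B} with hA
  have hεtop : ε ≠ ∞ := (hε1.trans_lt one_lt_top).ne
  -- main quantitative estimate
  have main : ∀ δ : ℝ≥0∞, 0 < δ → δ ≠ ∞ → μ A ≤ (1 + (ℬ.K : ℝ≥0∞) / ε) * δ := by
    intro δ hδ0 hδtop
    obtain ⟨Bs, hBsball, happ⟩ := ℬ.approx E hE δ hδ0
    set G := ⋃ k, Bs k with hG
    have hGE : μ (G \ E) < δ := by
      refine lt_of_le_of_lt (measure_mono ?_) happ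
      rw [Set.symmDiff_def]
      exact subset_union_right
    have hEG : μ (E \ G) < δ := by
      refine lt_of_le_of_lt (measure_mono ?_) happ
      rw [Set.symmDiff_def]
      exact subset_union_left
    set S := {k : ℕ | (Bs k ∩ A).Nonempty} with hS
    -- each ball meeting `A` loses at least an `ε`-fraction of its mass outside `E`
    have hkey : ∀ k ∈ S, ε * μ (Bs k) ≤ μ (Bs k \ E) := by
      intro k hk
      obtain ⟨x, hxB, hxA⟩ := hk
      have hball := hxA.2 (Bs k) (hBsball k) hxB
      have hfin : μ (Bs k) ≠ ∞ := (ℬ.measure_lt_top _ (hBsball k)).ne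
      have hsum : μ (Bs k ∩ E) + μ (Bs k \ E) = μ (Bs k) := measure_inter_add_diff _ hE
      have h1 : (1 - ε) * μ (Bs k) = μ (Bs k) - ε * μ (Bs k) := by
        rw [ENNReal.sub_mul (fun _ _ => hfin), one_mul]
      have hεle : ε * μ (Bs k) ≤ μ (Bs k) := by
        calc ε * μ (Bs k) ≤ 1 * μ (Bs k) := mul_le_mul_left hε1 _
          _ = μ (Bs k) := one_mul _
      have h2 : μ (Bs k) ≤ (μ (Bs k) - ε * μ (Bs k)) + μ (Bs k \ E) := by
        calc μ (Bs k) = μ (Bs k ∩ E) + μ (Bs k \ E) := hsum.symm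
          _ ≤ (1 - ε) * μ (Bs k) + μ (Bs k \ E) := add_le_add_left hball _
          _ = (μ (Bs k) - ε * μ (Bs k)) + μ (Bs k \ E) := by rw [h1]
      calc ε * μ (Bs k) = μ (Bs k) - (μ (Bs k) - ε * μ (Bs k)) :=
            (ENNReal.sub_sub_cancel hfin hεle).symm
        _ ≤ μ (Bs k \ E) := tsub_le_iff_left.mpr h2
    have hdiffsmall : ∀ k ∈ S, μ (Bs k \ E) ≤ δ := by
      intro k hk
      refine le_of_lt (lt_of_le_of_lt (measure_mono ?_) hGE)
      exact diff_subset_diff_left (subset_iUnion Bs k)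
    have hbound : ∀ k ∈ S, μ (Bs k) ≤ δ / ε := by
      intro k hk
      rw [ENNReal.le_div_iff_mul_le (Or.inl hε0.ne') (Or.inl hεtop)]
      calc μ (Bs k) * ε = ε * μ (Bs k) := mul_comm _ _
        _ ≤ μ (Bs k \ E) := hkey k hk
        _ ≤ δ := hdiffsmall k hk
    have hMtop : δ / ε ≠ ∞ := (ENNReal.div_lt_top hδtop hε0.ne').ne
    obtain ⟨T, hTS, hTdisj, hTcov⟩ :=
      ballBasis_vitali ℬ Bs S (fun k _ => hBsball k) hMtop hbound
    -- `A` is covered by `E \ G` together with the hulls of the selected balls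
    have hcover : A ⊆ (E \ G) ∪ ⋃ j ∈ T, ℬ.hull (Bs j) := by
      intro x hx
      by_cases hxG : x ∈ G
      · obtain ⟨k, hk⟩ := mem_iUnion.mp hxG
        obtain ⟨j, hjT, hsub⟩ := hTcov k ⟨x, hk, hx⟩
        exact Or.inr (mem_biUnion hjT (hsub hk))
      · exact Or.inl ⟨hx.1, hxG⟩
    -- the selected balls have small total mass
    have hsum : ∑' j : T, μ (Bs j) ≤ δ / ε := by
      rw [ENNReal.le_div_iff_mul_le (Or.inl hε0.ne') (Or.inl hεtop)]
      have h1 : (∑' j : T, μ (Bs j)) * ε = ∑' j : T, ε * μ (Bs j) := by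
        rw [ENNReal.tsum_mul_left, mul_comm]
      rw [h1]
      calc ∑' j : T, ε * μ (Bs ↑j) ≤ ∑' j : T, μ (Bs ↑j \ E) :=
            ENNReal.tsum_le_tsum fun j => hkey j (hTS j.2)
        _ = μ (⋃ j ∈ T, (Bs j \ E)) := by
            refine (measure_biUnion T.to_countable ?_ fun j hj =>
              (ℬ.measurableSet _ (hBsball j)).diff hE).symm
            exact hTdisj.mono fun j => diff_subset
        _ ≤ μ (G \ E) := by
            refine measure_mono (iUnion₂_subset fun j _ => ?_)
            exact diff_subset_diff_left (subset_iUnion Bs j)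
        _ ≤ δ := hGE.le
    calc μ A ≤ μ ((E \ G) ∪ ⋃ j ∈ T, ℬ.hull (Bs j)) := measure_mono hcover
      _ ≤ μ (E \ G) + μ (⋃ j ∈ T, ℬ.hull (Bs j)) := measure_union_le _ _
      _ ≤ δ + ∑' j : T, μ (ℬ.hull (Bs j)) :=
          add_le_add hEG.le (measure_biUnion_le μ T.to_countable _)
      _ ≤ δ + ∑' j : T, (ℬ.K : ℝ≥0∞) * μ (Bs j) :=
          add_le_add le_rfl (ENNReal.tsum_le_tsum fun j =>
            ℬ.measure_hull_le _ (hBsball j))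
      _ = δ + (ℬ.K : ℝ≥0∞) * ∑' j : T, μ (Bs j) := by rw [ENNReal.tsum_mul_left]
      _ ≤ δ + (ℬ.K : ℝ≥0∞) * (δ / ε) := add_le_add le_rfl (mul_le_mul_right hsum _)
      _ = (1 + (ℬ.K : ℝ≥0∞) / ε) * δ := by
          rw [add_mul, one_mul, div_eq_mul_inv, div_eq_mul_inv, mul_assoc,
            mul_comm (ε⁻¹) δ]
  -- let `δ → 0`
  have hC0 : (1 + (ℬ.K : ℝ≥0∞) / ε) ≠ 0 := by
    simp
  have hCtop : (1 + (ℬ.K : ℝ≥0∞) / ε) ≠ ∞ :=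
    ENNReal.add_ne_top.mpr ⟨one_ne_top, (ENNReal.div_lt_top coe_ne_top hε0.ne').ne⟩
  refine le_antisymm ?_ zero_le
  refine ENNReal.le_of_forall_pos_le_add fun r hr _ => ?_
  rw [zero_add]
  have hr' : ((r : ℝ≥0∞)) ≠ 0 := by exact_mod_cast hr.ne'
  have hδ0 : 0 < (r : ℝ≥0∞) / (1 + (ℬ.K : ℝ≥0∞) / ε) := ENNReal.div_pos hr' hCtop
  have hδtop : (r : ℝ≥0∞) / (1 + (ℬ.K : ℝ≥0∞) / ε) ≠ ∞ :=
    (ENNReal.div_lt_top coe_ne_top hC0).ne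
  calc μ A ≤ (1 + (ℬ.K : ℝ≥0∞) / ε) * ((r : ℝ≥0∞) / (1 + (ℬ.K : ℝ≥0∞) / ε)) :=
        main _ hδ0 hδtop
    _ = r := ENNReal.mul_div_cancel hC0 hCtop

end Key


/-- Every ball-basis satisfies the density property: for any measurable set `E`,
almost every point of `E` is a density point of `E`. -/
theorem ballBasis_density_property {X : Type*} [MeasurableSpace X]
    {μ : Measure X} (ℬ : BallBasis X μ) {E : Set X} (hE : MeasurableSet E) :
    μ {x | x ∈ E ∧ ¬ (∀ ε : ℝ≥0∞, 0 < ε →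
      ∃ B ∈ ℬ.balls, x ∈ B ∧ (1 - ε) * μ B < μ (B ∩ E))} = 0 := by
  classical
  set D : ℕ → Set X := fun n =>
    {x | x ∈ E ∧ ∀ B ∈ ℬ.balls, x ∈ B →
      μ (B ∩ E) ≤ (1 - ((n : ℝ≥0∞) + 1)⁻¹) * μ B} with hD
  have hDnull : ∀ n, μ (D n) = 0 := by
    intro n
    have h0 : (0 : ℝ≥0∞) < ((n : ℝ≥0∞) + 1)⁻¹ := by
      rw [ENNReal.inv_pos]
      exact (ENNReal.add_lt_top.mpr ⟨ENNReal.natCast_lt_top n, one_lt_top⟩).ne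
    have h1 : ((n : ℝ≥0∞) + 1)⁻¹ ≤ 1 := ENNReal.inv_le_one.mpr le_add_self
    exact ballBasis_density_aux ℬ hE h0 h1
  have hsub : {x | x ∈ E ∧ ¬ (∀ ε : ℝ≥0∞, 0 < ε →
      ∃ B ∈ ℬ.balls, x ∈ B ∧ (1 - ε) * μ B < μ (B ∩ E))} ⊆ ⋃ n, D n := by
    rintro x ⟨hxE, hx⟩
    push_neg at hx
    obtain ⟨ε, hε0, hε⟩ := hx
    obtain ⟨m, hm⟩ := ENNReal.exists_inv_nat_lt hε0.ne'
    refine mem_iUnion.mpr ⟨m, hxE, fun B hB hxB => ?_⟩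
    have hle : ((m : ℝ≥0∞) + 1)⁻¹ ≤ ε := by
      refine le_trans ?_ hm.le
      exact ENNReal.inv_le_inv.mpr le_self_add
    calc μ (B ∩ E) ≤ (1 - ε) * μ B := hε B hB hxB
      _ ≤ (1 - ((m : ℝ≥0∞) + 1)⁻¹) * μ B :=
          mul_le_mul_left (tsub_le_tsub_left hle 1) _
  refine le_antisymm ?_ zero_le
  calc μ _ ≤ μ (⋃ n, D n) := measure_mono hsub
    _ = 0 := measure_iUnion_null hDnull
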